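/- There exists a compact metric space X, which is moreover ultrametric, such that the lower and upper Minkowski dimensions of X are both equal to 1, while every nonempty proper closed subset Y ⊊ X has lower Minkowski dimension equal to 0. -/

import Mathlib

open scoped ENNReal NNReal

/-- `coverN S ε` : minimal number of closed balls of radius `ε` needed to cover `S`
(`∞` if no finite cover exists). -/
noncomputable def coverN {Z : Type*} [MetricSpace Z] (S : Set Z) (ε : ℝ) : ℝ≥0∞ :=
  ⨅ (F : Finset Z) (_ : S ⊆ ⋃ x ∈ F, Metric.closedBall x ε), (F.card : ℝ≥0∞)

/-- The upper Minkowski (box-counting) dimension of a set. -/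
noncomputable def upperMinkDim {Z : Type*} [MetricSpace Z] (S : Set Z) : ℝ :=
  Filter.limsup (fun ε : ℝ => Real.log (coverN S ε).toReal / Real.log (1 / ε))
    (nhdsWithin 0 (Set.Ioi 0))

/-- The lower Minkowski (box-counting) dimension of a set. -/
noncomputable def lowerMinkDim {Z : Type*} [MetricSpace Z] (S : Set Z) : ℝ :=
  Filter.liminf (fun ε : ℝ => Real.log (coverN S ε).toReal / Real.log (1 / ε))
    (nhdsWithin 0 (Set.Ioi 0))

namespace MinkP

open Set

/-! ### The splitting schedule -/

/-- block boundaries for the splitting schedule -/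
def bnd : ℕ → ℕ
  | 0 => 0
  | i + 1 => ((Nat.unpair i).2 + 2) * (bnd i + 1)

lemma bnd_lt_succ (i : ℕ) : bnd i < bnd (i + 1) := by
  have : bnd i + 1 ≤ ((Nat.unpair i).2 + 2) * (bnd i + 1) :=
    Nat.le_mul_of_pos_left _ (by omega)
  calc bnd i < bnd i + 1 := Nat.lt_succ_self _
  _ ≤ _ := this

lemma bnd_strictMono : StrictMono bnd := strictMono_nat_of_lt_succ bnd_lt_succ

lemma self_le_bnd (i : ℕ) : i ≤ bnd i := by
  induction i with
  | zero => simp [bnd]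
  | succ n ih => have := bnd_lt_succ n; omega

/-- index of the block containing `n` -/
def blk (n : ℕ) : ℕ := Nat.findGreatest (fun i => bnd i ≤ n) (n + 1)

lemma bnd_blk_le (n : ℕ) : bnd (blk n) ≤ n :=
  Nat.findGreatest_spec (P := fun i => bnd i ≤ n) (Nat.zero_le _) (by simp [bnd])

lemma lt_bnd_blk_succ (n : ℕ) : n < bnd (blk n + 1) := by
  by_contra h
  push_neg at h
  have h1 : blk n + 1 ≤ n + 1 := by
    have := self_le_bnd (blk n + 1); omega
  have := Nat.le_findGreatest (P := fun i => bnd i ≤ n) h1 h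
  simp only [blk] at this
  omega

lemma blk_eq_of (i n : ℕ) (h1 : bnd i ≤ n) (h2 : n < bnd (i+1)) : blk n = i := by
  have a1 := bnd_blk_le n
  have a2 := lt_bnd_blk_succ n
  rcases lt_trichotomy (blk n) i with h | h | h
  · exfalso
    have : bnd (blk n + 1) ≤ bnd i := bnd_strictMono.monotone (by omega)
    omega
  · exact h
  · exfalso
    have : bnd (i+1) ≤ bnd (blk n) := bnd_strictMono.monotone (by omega)
    omega

/-- the splitting schedule: the label that splits at level `n`. -/
def sch (n : ℕ) : ℕ :=
  let j := (Nat.unpair (blk n)).1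
  if j < bnd (blk n) then j else 0

lemma sch_lt (n : ℕ) : sch n < 2 ^ n := by
  have h1 : bnd (blk n) ≤ n := bnd_blk_le n
  have h2 : n < 2 ^ n := Nat.lt_two_pow_self
  have h3 : 0 < 2 ^ n := Nat.pow_pos (by norm_num)
  unfold sch
  dsimp only
  split <;> omega

lemma sch_eq_on_block {i j n : ℕ} (hj : (Nat.unpair i).1 = j) (hjb : j < bnd i)
    (h1 : bnd i ≤ n) (h2 : n < bnd (i+1)) : sch n = j := by
  have : blk n = i := blk_eq_of i n h1 h2
  unfold sch
  rw [this, hj, if_pos hjb]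

/-- main property of the schedule: every label `j` is the split target of
arbitrarily late, arbitrarily long blocks. -/
lemma sch_block_exists (j K : ℕ) :
    ∃ n₀ n₁ : ℕ, K ≤ n₀ ∧ j < n₀ ∧ K * n₀ ≤ n₁ ∧ n₀ < n₁ ∧
      ∀ n, n₀ ≤ n → n < n₁ → sch n = j := by
  classical
  set i := Nat.pair j (K + j + 1) with hi
  have hun : Nat.unpair i = (j, K + j + 1) := Nat.unpair_pair _ _
  have hKi : K + j + 1 ≤ i := hi ▸ Nat.right_le_pair j (K + j + 1)
  have hbi : K + j + 1 ≤ bnd i := hKi.trans (self_le_bnd i)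
  refine ⟨bnd i, bnd (i+1), by omega, by omega, ?_, bnd_lt_succ i, ?_⟩
  · show K * bnd i ≤ bnd (i+1)
    have : bnd (i+1) = ((Nat.unpair i).2 + 2) * (bnd i + 1) := rfl
    rw [this, hun]
    nlinarith [bnd_strictMono.monotone (Nat.zero_le i), Nat.zero_le (bnd i)]
  · intro n hn1 hn2
    exact sch_eq_on_block (by rw [hun]) (by omega) hn1 hn2

/-! ### The tree of labels and the space -/

/-- parent of label `x` at level `t+1`: itself if already a valid level-`t` label,
else the scheduled splitting label. -/
def par (t x : ℕ) : ℕ := if x < 2 ^ t then x else sch t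

lemma par_lt (t x : ℕ) : par t x < 2 ^ t := by
  unfold par; split
  · assumption
  · exact sch_lt t

/-- membership in the space: a sequence of labels coherent w.r.t. `par`. -/
def Xmem (a : ℕ → ℕ) : Prop := ∀ t, a t < 2 ^ t ∧ a t = par t (a (t + 1))

/-- descending chain: starting from label `x` (viewed at level `Nat.size x`),
`descend x k` is its ancestor `k` levels down. -/
def descend (x : ℕ) : ℕ → ℕ
  | 0 => x
  | k + 1 => par (Nat.size x - (k + 1)) (descend x k)

/-- the canonical point through label `x`: equal to `x` at every level `≥ size x`. -/
def seqOf (x : ℕ) (t : ℕ) : ℕ := if t < Nat.size x then descend x (Nat.size x - t) else x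

lemma seqOf_eq_self {x t : ℕ} (h : x < 2 ^ t) : seqOf x t = x := by
  unfold seqOf
  rw [if_neg]
  simp only [not_lt]
  exact Nat.size_le.2 h

lemma descend_lt (x : ℕ) (k : ℕ) (hk : k ≤ Nat.size x) : descend x k < 2 ^ (Nat.size x - k) := by
  cases k with
  | zero => simpa [descend] using Nat.lt_size_self x
  | succ k => exact par_lt _ _

lemma seqOf_mem (x : ℕ) : Xmem (seqOf x) := by
  intro t
  rcases lt_or_ge t (Nat.size x) with h | h
  · constructor
    · unfold seqOf
      rw [if_pos h]
      have := descend_lt x (Nat.size x - t) (by omega)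
      rwa [Nat.sub_sub_self h.le] at this
    · unfold seqOf
      rw [if_pos h]
      rcases Nat.lt_or_ge (t+1) (Nat.size x) with h2 | h2
      · rw [if_pos h2]
        have hst : Nat.size x - t = (Nat.size x - (t+1)) + 1 := by omega
        rw [hst]
        have hd : descend x ((Nat.size x - (t+1)) + 1)
            = par (Nat.size x - ((Nat.size x - (t+1)) + 1)) (descend x (Nat.size x - (t+1))) := rfl
        rw [hd]
        congr 1
        omega
      · rw [if_neg (by omega)]
        have ht1 : Nat.size x - t = 1 := by omega
        rw [ht1]
        have hd : descend x 1 = par (Nat.size x - 1) x := rfl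
        rw [hd]
        congr 1
        omega
  · have hx : x < 2 ^ t := Nat.size_le.1 h
    rw [seqOf_eq_self hx,
      seqOf_eq_self (hx.trans_le (Nat.pow_le_pow_right (by norm_num) (by omega)))]
    refine ⟨hx, ?_⟩
    unfold par
    rw [if_pos hx]

/-- coherence downward: if `a (u + k) = c` and `c` is a valid label at level `u`,
then `a u = c`. -/
lemma eq_of_eq_above {a : ℕ → ℕ} (ha : Xmem a) {c u : ℕ} (hc : c < 2 ^ u) :
    ∀ k, a (u + k) = c → a u = c := by
  intro k
  induction k with
  | zero => simpa using id
  | succ k ih =>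
    intro h
    apply ih
    have := (ha (u + k)).2
    rw [show u + (k+1) = (u + k) + 1 by omega] at h
    rw [this, h]
    unfold par
    rw [if_pos (hc.trans_le (Nat.pow_le_pow_right (by norm_num) (by omega)))]

/-- points agreeing at level `n` agree at all lower levels. -/
lemma agree_below {a b : ℕ → ℕ} (ha : Xmem a) (hb : Xmem b) {n : ℕ} (h : a n = b n) :
    ∀ t, t ≤ n → a t = b t := by
  intro t ht
  obtain ⟨k, rfl⟩ : ∃ k, n = t + k := ⟨n - t, by omega⟩
  clear ht
  revert h
  induction k with
  | zero => exact fun h => by simpa using h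
  | succ k ih =>
    intro h
    apply ih
    have h1 := (ha (t+k)).2
    have h2 := (hb (t+k)).2
    rw [show t + (k+1) = (t+k)+1 by omega] at h
    rw [h1, h2, h]

/-- the key concentration property: during a block of levels `[n₀, n₁)` on which the
schedule constantly splits label `j`, all new labels descend from `j`; hence a point
avoiding `j` at level `m` has a small label at level `n₁`. -/
lemma out_label {a : ℕ → ℕ} (ha : Xmem a) {m j n₀ n₁ : ℕ} (hj : j < 2 ^ m)
    (hm : m ≤ n₀) (hn : n₀ < n₁) (hsch : ∀ n, n₀ ≤ n → n < n₁ → sch n = j)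
    (hane : a m ≠ j) : a n₁ < 2 ^ n₀ := by
  by_contra hbig
  push_neg at hbig
  set x := a n₁ with hx
  have hxlt : x < 2 ^ n₁ := (ha n₁).1
  have hsz1 : n₀ < Nat.size x := Nat.lt_size.2 hbig
  have hsz2 : Nat.size x ≤ n₁ := Nat.size_le.2 hxlt
  set t := Nat.size x - 1 with htdef
  have ht0 : n₀ ≤ t := by omega
  have ht1 : t < n₁ := by omega
  have hxt1 : x < 2 ^ (t + 1) := by
    have : t + 1 = Nat.size x := by omega
    rw [this]; exact Nat.lt_size_self x
  have hxt : 2 ^ t ≤ x := by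
    have : t < Nat.size x := by omega
    exact Nat.lt_size.1 this
  -- a (t+1) = x
  have hat1 : a (t + 1) = x := by
    apply eq_of_eq_above ha hxt1 (n₁ - (t+1))
    rw [show t + 1 + (n₁ - (t+1)) = n₁ by omega]
  -- a t = j
  have hat : a t = j := by
    have := (ha t).2
    rw [hat1] at this
    rw [this]
    unfold par
    rw [if_neg (by omega)]
    exact hsch t ht0 ht1
  -- a m = j
  have : a m = j := by
    apply eq_of_eq_above ha hj (t - m)
    rw [show m + (t - m) = t by omega]
    exact hat
  exact hane this

/-! ### The metric space -/

noncomputable instance : MetricSpace (ℕ → ℕ) := PiNat.metricSpace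

/-- The compact ultrametric space of Proposition 7.1. -/
def Xsp : Type := {a : ℕ → ℕ // Xmem a}

noncomputable instance : MetricSpace Xsp := Subtype.metricSpace

lemma dist_le_of_agree {x y : Xsp} {n : ℕ} (h : x.1 n = y.1 n) :
    dist x y ≤ (1/2 : ℝ) ^ (n + 1) := by
  have : x.1 ∈ PiNat.cylinder y.1 (n+1) := by
    rw [PiNat.mem_cylinder_iff]
    intro i hi
    exact agree_below x.2 y.2 h i (by omega)
  exact PiNat.mem_cylinder_iff_dist_le.1 this

lemma agree_of_dist_lt {x y : Xsp} {n : ℕ} (h : dist x y < (1/2 : ℝ) ^ n) :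
    x.1 n = y.1 n :=
  PiNat.apply_eq_of_dist_lt (x := x.1) (y := y.1) h le_rfl

lemma Xsp_ultra (x y z : Xsp) : dist x z ≤ max (dist x y) (dist y z) :=
  PiNat.dist_triangle_nonarch x.1 y.1 z.1

instance : CompactSpace Xsp := by
  have hsub : {a : ℕ → ℕ | Xmem a} ⊆ Set.pi Set.univ (fun t => Set.Iio (2 ^ t)) := by
    intro a ha t _
    exact (ha t).1
  have hcpt : IsCompact (Set.pi Set.univ (fun t : ℕ => Set.Iio (2 ^ t))) :=
    isCompact_univ_pi (fun t => (Set.finite_Iio _).isCompact)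
  have hclosed : IsClosed {a : ℕ → ℕ | Xmem a} := by
    have : {a : ℕ → ℕ | Xmem a} =
        ⋂ t, {a : ℕ → ℕ | a t < 2 ^ t ∧ a t = par t (a (t+1))} := by
      ext a
      simp only [Set.mem_setOf_eq, Set.mem_iInter]
      rfl
    rw [this]
    refine isClosed_iInter fun t => ?_
    have : {a : ℕ → ℕ | a t < 2 ^ t ∧ a t = par t (a (t+1))} =
        (fun a : ℕ → ℕ => (a t, a (t+1))) ⁻¹' {p : ℕ × ℕ | p.1 < 2 ^ t ∧ p.1 = par t p.2} := by
      ext a; simp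
    rw [this]
    exact (isClosed_discrete _).preimage ((continuous_apply t).prodMk (continuous_apply (t+1)))
  have : IsCompact {a : ℕ → ℕ | Xmem a} := hcpt.of_isClosed_subset hclosed hsub
  exact isCompact_iff_compactSpace.1 this

/-! ### Covering number computations -/

lemma coverN_le_of_cover {Z : Type*} [MetricSpace Z] {S : Set Z} {ε : ℝ} {F : Finset Z}
    (h : S ⊆ ⋃ x ∈ F, Metric.closedBall x ε) : coverN S ε ≤ F.card := by
  unfold coverN
  exact iInf_le_of_le F (iInf_le _ h)

lemma one_le_coverN {Z : Type*} [MetricSpace Z] {S : Set Z} {ε : ℝ} (hS : S.Nonempty) :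
    1 ≤ coverN S ε := by
  unfold coverN
  refine le_iInf fun F => le_iInf fun hF => ?_
  obtain ⟨y, hy⟩ := hS
  have := hF hy
  simp only [Set.mem_iUnion] at this
  obtain ⟨x, hxF, -⟩ := this
  have : 1 ≤ F.card := Finset.card_pos.2 ⟨x, hxF⟩
  exact_mod_cast this

lemma card_le_coverN {Z : Type*} [MetricSpace Z]
    (hum : ∀ x y z : Z, dist x z ≤ max (dist x y) (dist y z))
    {S : Set Z} {ε : ℝ} (c : Z → ℕ) (V : Finset ℕ)
    (hV : ∀ v ∈ V, ∃ y ∈ S, c y = v)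
    (hsep : ∀ y z : Z, dist y z ≤ ε → c y = c z) :
    (V.card : ℝ≥0∞) ≤ coverN S ε := by
  classical
  rcases V.eq_empty_or_nonempty with rfl | ⟨v0, hv0⟩
  · simp
  obtain ⟨y0, hy0S, -⟩ := hV v0 hv0
  unfold coverN
  refine le_iInf fun F => le_iInf fun hF => ?_
  have key : ∀ v ∈ V, ∃ p : Z × Z, p.1 ∈ F ∧ p.2 ∈ S ∧ c p.2 = v ∧ dist p.2 p.1 ≤ ε := by
    intro v hv
    obtain ⟨y, hyS, hyc⟩ := hV v hv
    have := hF hyS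
    simp only [Set.mem_iUnion] at this
    obtain ⟨x, hxF, hyx⟩ := this
    exact ⟨(x, y), hxF, hyS, hyc, Metric.mem_closedBall.1 hyx⟩
  choose g hg using key
  set f : ℕ → Z := fun v => if h : v ∈ V then (g v h).1 else y0 with hf
  have hmaps : ∀ v ∈ V, f v ∈ F := by
    intro v hv
    simp only [hf, dif_pos hv]
    exact (hg v hv).1
  have hinj : Set.InjOn f V := by
    intro v hv w hw hvw
    rw [Finset.mem_coe] at hv hw
    simp only [hf] at hvw
    rw [dif_pos hv, dif_pos hw] at hvw
    obtain ⟨-, -, hcv, hdv⟩ := hg v hv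
    obtain ⟨-, -, hcw, hdw⟩ := hg w hw
    have h1 : c (g v hv).2 = c (g v hv).1 := hsep _ _ hdv
    have h2 : c (g w hw).2 = c (g w hw).1 := hsep _ _ hdw
    rw [← hcv, ← hcw, h1, h2, hvw]
  have : V.card ≤ F.card := Finset.card_le_card_of_injOn f hmaps hinj
  exact_mod_cast this

/-- exact covering number of the whole space. -/
lemma coverN_univ_eq (n : ℕ) {ε : ℝ} (h1 : (1/2 : ℝ) ^ (n+1) ≤ ε) (h2 : ε < (1/2 : ℝ) ^ n) :
    coverN (Set.univ : Set Xsp) ε = ((2 ^ n : ℕ) : ℝ≥0∞) := by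
  apply le_antisymm
  · -- covering by canonical points
    classical
    set F : Finset Xsp :=
      (Finset.range (2 ^ n)).image (fun x => (⟨seqOf x, seqOf_mem x⟩ : Xsp)) with hFdef
    have hcov : (Set.univ : Set Xsp) ⊆ ⋃ x ∈ F, Metric.closedBall x ε := by
      intro a _
      simp only [Set.mem_iUnion]
      refine ⟨⟨seqOf (a.1 n), seqOf_mem _⟩, ?_, ?_⟩
      · rw [hFdef]
        exact Finset.mem_image.2 ⟨a.1 n, Finset.mem_range.2 (a.2 n).1, rfl⟩
      · apply Metric.mem_closedBall.2
        have : a.1 n = seqOf (a.1 n) n := (seqOf_eq_self (a.2 n).1).symm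
        exact (dist_le_of_agree this).trans h1
    calc coverN (Set.univ : Set Xsp) ε ≤ F.card := coverN_le_of_cover hcov
    _ ≤ ((2 ^ n : ℕ) : ℝ≥0∞) := by
        rw [hFdef]
        exact_mod_cast Finset.card_image_le.trans (le_of_eq (Finset.card_range _))
  · -- lower bound by separated labels
    have := card_le_coverN (S := (Set.univ : Set Xsp)) (ε := ε) Xsp_ultra
      (fun a => a.1 n) (Finset.range (2 ^ n))
      (fun v hv => ⟨⟨seqOf v, seqOf_mem v⟩, Set.mem_univ _,
        seqOf_eq_self (Finset.mem_range.1 hv)⟩)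
      (fun y z h => agree_of_dist_lt (h.trans_lt h2))
    simpa using this

/-- covering bound for sets avoiding label `j` at level `m`. -/
lemma coverN_subset_le {Y : Set Xsp} {m j n₀ n₁ : ℕ} (hj : j < 2 ^ m)
    (hm : m ≤ n₀) (hn : n₀ < n₁) (hsch : ∀ n, n₀ ≤ n → n < n₁ → sch n = j)
    (hY : ∀ y ∈ Y, y.1 m ≠ j) :
    coverN Y ((1/2 : ℝ) ^ n₁) ≤ ((2 ^ n₀ : ℕ) : ℝ≥0∞) := by
  classical
  set F : Finset Xsp :=
    (Finset.range (2 ^ n₀)).image (fun x => (⟨seqOf x, seqOf_mem x⟩ : Xsp)) with hFdef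
  have hcov : Y ⊆ ⋃ x ∈ F, Metric.closedBall x ((1/2 : ℝ) ^ n₁) := by
    intro y hy
    have hsmall : y.1 n₁ < 2 ^ n₀ := out_label y.2 hj hm hn hsch (hY y hy)
    simp only [Set.mem_iUnion]
    refine ⟨⟨seqOf (y.1 n₁), seqOf_mem _⟩, ?_, ?_⟩
    · rw [hFdef]
      exact Finset.mem_image.2 ⟨y.1 n₁, Finset.mem_range.2 hsmall, rfl⟩
    · apply Metric.mem_closedBall.2
      have hagree : y.1 n₁ = seqOf (y.1 n₁) n₁ := (seqOf_eq_self (y.2 n₁).1).symm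
      refine (dist_le_of_agree hagree).trans ?_
      exact pow_le_pow_of_le_one (by norm_num) (by norm_num) (by omega)
  calc coverN Y _ ≤ F.card := coverN_le_of_cover hcov
  _ ≤ _ := by
      rw [hFdef]
      exact_mod_cast Finset.card_image_le.trans (le_of_eq (Finset.card_range _))

/-! ### Dimension of the whole space -/

/-- the function whose liminf/limsup is the Minkowski dimension of the whole space -/
noncomputable def fX : ℝ → ℝ :=
  fun ε => Real.log (coverN (Set.univ : Set Xsp) ε).toReal / Real.log (1 / ε)

lemma fX_bounds (n : ℕ) {ε : ℝ} (hε : 0 < ε)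
    (h1 : (1/2 : ℝ) ^ (n+1) ≤ ε) (h2 : ε < (1/2 : ℝ) ^ n) :
    1 - 1 / (n + 1) ≤ fX ε ∧ fX ε ≤ 1 := by
  have hpow : ∀ k : ℕ, ((1:ℝ)/2) ^ k = 1 / 2 ^ k := fun k => by
    rw [div_pow, one_pow]
  have h2k : (0:ℝ) < 2 ^ n := by positivity
  have h2k1 : (0:ℝ) < 2 ^ (n+1) := by positivity
  have hlt : (2:ℝ) ^ n < 1 / ε := by
    rw [lt_div_iff₀ hε]
    rw [hpow, lt_div_iff₀ h2k] at h2
    rw [mul_comm]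
    exact h2
  have hle : (1:ℝ) / ε ≤ 2 ^ (n+1) := by
    rw [div_le_iff₀ hε]
    rw [hpow, div_le_iff₀ h2k1] at h1
    rw [mul_comm]
    exact h1
  have hlog2 : (0:ℝ) < Real.log 2 := Real.log_pos one_lt_two
  have hL1 : (n : ℝ) * Real.log 2 < Real.log (1 / ε) := by
    have := Real.log_lt_log h2k hlt
    rwa [Real.log_pow] at this
  have hL2 : Real.log (1 / ε) ≤ ((n : ℝ) + 1) * Real.log 2 := by
    have := Real.log_le_log (by positivity) hle
    rwa [Real.log_pow, Nat.cast_add, Nat.cast_one] at this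
  have hLpos : 0 < Real.log (1 / ε) := by
    have : (0:ℝ) ≤ (n : ℝ) * Real.log 2 := by positivity
    linarith
  have hval : (coverN (Set.univ : Set Xsp) ε).toReal = (2:ℝ) ^ n := by
    rw [coverN_univ_eq n h1 h2]
    simp
  have hnum : Real.log (coverN (Set.univ : Set Xsp) ε).toReal = (n : ℝ) * Real.log 2 := by
    rw [hval, Real.log_pow]
  constructor
  · unfold fX
    rw [hnum]
    have hgoal : (n : ℝ) / ((n : ℝ) + 1) ≤ (n : ℝ) * Real.log 2 / Real.log (1 / ε) := by
      rw [div_le_div_iff₀ (by positivity) hLpos]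
      nlinarith [hL2, hlog2, Nat.cast_nonneg (α := ℝ) n]
    have heq : 1 - 1 / ((n : ℝ) + 1) = (n : ℝ) / ((n : ℝ) + 1) := by
      field_simp
      ring
    rw [show ((n : ℝ) + 1) = ((n : ℕ) : ℝ) + 1 by norm_num] at heq
    linarith [heq ▸ hgoal]
  · unfold fX
    rw [hnum, div_le_one hLpos]
    linarith

lemma exists_scale {ε : ℝ} (h0 : 0 < ε) (h1 : ε < 1) :
    ∃ n, (1/2 : ℝ) ^ (n+1) ≤ ε ∧ ε < (1/2 : ℝ) ^ n := by
  classical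
  have hex : ∃ k, (1/2 : ℝ) ^ k ≤ ε :=
    (exists_pow_lt_of_lt_one h0 one_half_lt_one).imp fun k h => h.le
  have hk₀ : (1/2 : ℝ) ^ (Nat.find hex) ≤ ε := Nat.find_spec hex
  have hk₀0 : Nat.find hex ≠ 0 := by
    intro h
    rw [h, pow_zero] at hk₀
    linarith
  refine ⟨Nat.find hex - 1, ?_, ?_⟩
  · rw [show Nat.find hex - 1 + 1 = Nat.find hex by omega]
    exact hk₀
  · have := Nat.find_min hex (m := Nat.find hex - 1) (by omega)
    push_neg at this
    exact this

lemma tendsto_fX : Filter.Tendsto fX (nhdsWithin 0 (Set.Ioi 0)) (nhds 1) := by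
  rw [Metric.tendsto_nhdsWithin_nhds]
  intro r hr
  obtain ⟨N, hN⟩ := exists_nat_one_div_lt hr
  refine ⟨(1/2 : ℝ) ^ (N+1), by positivity, ?_⟩
  intro ε hε hd
  rw [Real.dist_eq, sub_zero, abs_of_pos hε] at hd
  have hε1 : ε < 1 := by
    have : ((1:ℝ)/2) ^ (N+1) ≤ 1 := pow_le_one₀ (by norm_num) (by norm_num)
    linarith
  obtain ⟨n, h1, h2⟩ := exists_scale hε hε1
  have hnN : N ≤ n := by
    by_contra hc
    push_neg at hc
    have : ((1:ℝ)/2) ^ (N+1) ≤ (1/2) ^ (n+1) :=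
      pow_le_pow_of_le_one (by norm_num) (by norm_num) (by omega)
    linarith
  obtain ⟨hb1, hb2⟩ := fX_bounds n hε h1 h2
  rw [Real.dist_eq]
  have hstep : (1:ℝ) / (n+1) ≤ 1 / (N+1) := by
    apply one_div_le_one_div_of_le (by positivity)
    have : (N:ℝ) ≤ n := Nat.cast_le.2 hnN
    linarith
  have : |fX ε - 1| ≤ 1 / (n+1) := abs_le.2 ⟨by linarith, by linarith⟩
  calc |fX ε - 1| ≤ 1 / (n+1) := this
  _ ≤ 1 / (N+1) := hstep
  _ < r := hN

lemma lowerMinkDim_univ : lowerMinkDim (Set.univ : Set Xsp) = 1 :=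
  tendsto_fX.liminf_eq

lemma upperMinkDim_univ : upperMinkDim (Set.univ : Set Xsp) = 1 :=
  tendsto_fX.limsup_eq

/-! ### Proper closed subsets -/

lemma lowerMinkDim_subset_zero {Y : Set Xsp} (hne : Y.Nonempty) (hcl : IsClosed Y)
    (hproper : Y ≠ Set.univ) : lowerMinkDim Y = 0 := by
  classical
  -- find an avoided label
  obtain ⟨p, hp⟩ : ∃ p : Xsp, p ∉ Y := by
    by_contra h
    push_neg at h
    exact hproper (Set.eq_univ_of_forall h)
  obtain ⟨r, hr0, hball⟩ := Metric.isOpen_iff.1 hcl.isOpen_compl p hp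
  obtain ⟨m, hmr⟩ : ∃ m : ℕ, (1/2 : ℝ) ^ m < r := exists_pow_lt_of_lt_one hr0 one_half_lt_one
  have hj : p.1 m < 2 ^ m := (p.2 m).1
  have havoid : ∀ y ∈ Y, y.1 m ≠ p.1 m := by
    intro y hy hEq
    have h1 : dist y p ≤ (1/2 : ℝ) ^ (m+1) := dist_le_of_agree hEq
    have h2 : ((1:ℝ)/2) ^ (m+1) < (1/2) ^ m := by
      apply pow_lt_pow_right_of_lt_one₀ (by norm_num) (by norm_num)
      omega
    have : y ∈ Metric.ball p r := by
      rw [Metric.mem_ball]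
      linarith
    exact hball this hy
  set g : ℝ → ℝ := fun ε => Real.log (coverN Y ε).toReal / Real.log (1/ε) with hg
  have h0mem : (0:ℝ) ∈ {a : ℝ | ∀ᶠ ε in nhdsWithin 0 (Set.Ioi 0), a ≤ g ε} := by
    have hIoo : Set.Ioo (0:ℝ) 1 ∈ nhdsWithin 0 (Set.Ioi 0) :=
      Ioo_mem_nhdsGT_of_mem ⟨le_refl _, by norm_num⟩
    filter_upwards [hIoo] with ε hε
    apply div_nonneg
    · rcases eq_or_ne (coverN Y ε) ⊤ with h | h
      · simp [h]
      · have h1 : 1 ≤ coverN Y ε := one_le_coverN hne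
        have : (1:ℝ) ≤ (coverN Y ε).toReal := by
          rw [← ENNReal.toReal_one]
          exact ENNReal.toReal_mono h h1
        exact Real.log_nonneg this
    · apply Real.log_nonneg
      rw [le_div_iff₀ hε.1]
      nlinarith [hε.2]
  have hub : ∀ b ∈ {a : ℝ | ∀ᶠ ε in nhdsWithin 0 (Set.Ioi 0), a ≤ g ε}, b ≤ 0 := by
    intro b hb
    by_contra hbc
    push_neg at hbc
    obtain ⟨t, ht0, hts⟩ := Metric.mem_nhdsWithin_iff.1 hb
    obtain ⟨K₁, hK₁⟩ := exists_pow_lt_of_lt_one ht0 one_half_lt_one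
    obtain ⟨K₂, hK₂⟩ := exists_nat_one_div_lt hbc
    set K := max m (max K₁ (K₂ + 1)) + 1 with hK
    obtain ⟨n₀, n₁, hKn₀, hjn₀, hKn, hn₀n₁, hsch⟩ := sch_block_exists (p.1 m) K
    have hmn₀ : m ≤ n₀ := le_trans (by omega) hKn₀
    set ε := (1/2 : ℝ) ^ n₁ with hεdef
    have hε0 : (0:ℝ) < ε := by positivity
    have hn₁K₁ : K₁ ≤ n₁ := by omega
    have hεt : ε < t := by
      have : ε ≤ (1/2 : ℝ) ^ K₁ :=
        pow_le_pow_of_le_one (by norm_num) (by norm_num) hn₁K₁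
      linarith
    have hbg : b ≤ g ε := hts ⟨by rw [Metric.mem_ball, Real.dist_eq, sub_zero, abs_of_pos hε0]; exact hεt, hε0⟩
    -- now bound g ε
    have hcovY : coverN Y ε ≤ ((2 ^ n₀ : ℕ) : ℝ≥0∞) :=
      coverN_subset_le hj hmn₀ hn₀n₁ hsch havoid
    have hcovne : coverN Y ε ≠ ⊤ :=
      ne_top_of_le_ne_top (by simp) hcovY
    have htoReal : (coverN Y ε).toReal ≤ (2:ℝ) ^ n₀ := by
      have := ENNReal.toReal_mono (by simp) hcovY
      simpa using this
    have hlog2 : (0:ℝ) < Real.log 2 := Real.log_pos one_lt_two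
    have hinv : (1:ℝ) / ε = 2 ^ n₁ := by
      rw [hεdef, one_div, ← inv_pow]
      norm_num
    have hden : Real.log (1/ε) = (n₁ : ℝ) * Real.log 2 := by
      rw [hinv, Real.log_pow]
    have hdenpos : (0:ℝ) < Real.log (1/ε) := by
      rw [hden]
      have : (0:ℝ) < (n₁ : ℝ) := by
        have : 0 < n₁ := by omega
        exact_mod_cast this
      positivity
    have h1R : (1:ℝ) ≤ (coverN Y ε).toReal := by
      rw [← ENNReal.toReal_one]
      exact ENNReal.toReal_mono hcovne (one_le_coverN hne)
    have hnum : Real.log (coverN Y ε).toReal ≤ (n₀ : ℝ) * Real.log 2 := by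
      have := Real.log_le_log (by linarith) htoReal
      rwa [Real.log_pow] at this
    have hn₁pos : (0:ℝ) < (n₁ : ℝ) := by
      have : 0 < n₁ := by omega
      exact_mod_cast this
    have hgle : g ε ≤ (n₀ : ℝ) / (n₁ : ℝ) := by
      rw [hg]
      simp only
      rw [hden]
      calc Real.log (coverN Y ε).toReal / ((n₁:ℝ) * Real.log 2)
          ≤ ((n₀:ℝ) * Real.log 2) / ((n₁:ℝ) * Real.log 2) := by
            exact (div_le_div_iff_of_pos_right (by positivity)).2 hnum
      _ = (n₀ : ℝ) / (n₁ : ℝ) := mul_div_mul_right _ _ (ne_of_gt hlog2)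
    have hfrac : (n₀ : ℝ) / (n₁ : ℝ) ≤ 1 / ((K₂ : ℝ) + 1) := by
      rw [div_le_div_iff₀ hn₁pos (by positivity)]
      have hnat : n₀ * (K₂ + 1) ≤ n₁ := by
        calc n₀ * (K₂ + 1) ≤ n₀ * K := Nat.mul_le_mul_left n₀ (by omega)
        _ = K * n₀ := Nat.mul_comm _ _
        _ ≤ n₁ := hKn
      calc (n₀ : ℝ) * ((K₂:ℝ) + 1) = ((n₀ * (K₂ + 1) : ℕ) : ℝ) := by push_cast; ring
      _ ≤ (n₁ : ℝ) := by exact_mod_cast hnat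
      _ = 1 * (n₁ : ℝ) := by ring
    have : b ≤ 1 / ((K₂ : ℝ) + 1) := le_trans hbg (le_trans hgle hfrac)
    have hK₂' : 1 / ((K₂ : ℝ) + 1) < b := hK₂
    linarith
  unfold lowerMinkDim
  rw [Filter.liminf_eq]
  exact le_antisymm (csSup_le ⟨0, h0mem⟩ hub)
    (le_csSup ⟨0, fun x hx => hub x hx⟩ h0mem)

end MinkP

/-- Proposition 7.1: there is a compact ultrametric space of Minkowski dimension `1`
all of whose nonempty proper closed subsets have lower Minkowski dimension `0`. -/
theorem exists_space_with_small_proper_subsets :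
    ∃ (X : Type) (_ : MetricSpace X), CompactSpace X ∧
      (∀ x y z : X, dist x z ≤ max (dist x y) (dist y z)) ∧
      lowerMinkDim (Set.univ : Set X) = 1 ∧
      upperMinkDim (Set.univ : Set X) = 1 ∧
      ∀ Y : Set X, Y.Nonempty → IsClosed Y → Y ≠ Set.univ → lowerMinkDim Y = 0 := by
  exact ⟨MinkP.Xsp, inferInstance, inferInstance, MinkP.Xsp_ultra,
    MinkP.lowerMinkDim_univ, MinkP.upperMinkDim_univ,
    fun Y h1 h2 h3 => MinkP.lowerMinkDim_subset_zero h1 h2 h3⟩
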